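/- For all integers k ≥ 2 and n ≥ m ≥ 3, the Ramsey number of a k-uniform loose path versus a k-uniform loose cycle satisfies R(P^k_n, C^k_m) ≥ (k−1)n + ⌊(m+1)/2⌋. -/

import Mathlib

/-- The set of vertex *indices* of the `i`-th edge of a `k`-uniform loose path/cycle:
the indices `i*(k-1), …, i*(k-1) + (k-1)` (consecutive edges overlap in one index). -/
def looseEdgeIdx (k i : ℕ) : Finset ℕ := Finset.Icc (i * (k - 1)) (i * (k - 1) + (k - 1))

/-- `v` is (the vertex map of) a copy of the `k`-uniform loose path of length `n`
(vertex indices `0, …, n*(k-1)`) all of whose edges receive color `c` under the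
coloring `col` of the `k`-subsets of `V`. -/
def IsLoosePathCopy {V : Type} [DecidableEq V] (k : ℕ) (col : Finset V → Bool) (c : Bool)
    (n : ℕ) (v : ℕ → V) : Prop :=
  Set.InjOn v (Set.Iio (n * (k - 1) + 1)) ∧
    ∀ i < n, col ((looseEdgeIdx k i).image v) = c

/-- The coloring `col` contains a copy of the `k`-uniform loose path of length `n`
in color `c`. -/
def HasLoosePath {V : Type} [DecidableEq V] (k : ℕ) (col : Finset V → Bool) (c : Bool)
    (n : ℕ) : Prop :=
  ∃ v : ℕ → V, IsLoosePathCopy k col c n v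

/-- `v` is (the vertex map of) a copy of the `k`-uniform loose cycle of length `n`
(vertex indices `0, …, n*(k-1) - 1`, taken modulo `n*(k-1)`) all of whose edges
receive color `c` under the coloring `col`. -/
def IsLooseCycleCopy {V : Type} [DecidableEq V] (k : ℕ) (col : Finset V → Bool) (c : Bool)
    (n : ℕ) (v : ℕ → V) : Prop :=
  Set.InjOn v (Set.Iio (n * (k - 1))) ∧
    ∀ i < n, col ((looseEdgeIdx k i).image (fun j => v (j % (n * (k - 1))))) = c

/-- The coloring `col` contains a copy of the `k`-uniform loose cycle of length `n`
in color `c`. -/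
def HasLooseCycle {V : Type} [DecidableEq V] (k : ℕ) (col : Finset V → Bool) (c : Bool)
    (n : ℕ) : Prop :=
  ∃ v : ℕ → V, IsLooseCycleCopy k col c n v

/-- Every index `j ≤ n*K` lies in some edge interval `[i*K, i*K + K]` with `i < n`. -/
lemma helper_edge_cover (K n j : ℕ) (hK : 1 ≤ K) (hn : 1 ≤ n) (hj : j ≤ n * K) :
    ∃ i < n, i * K ≤ j ∧ j ≤ i * K + K := by
  induction n with
  | zero => omega
  | succ n ih =>
    rcases Nat.eq_zero_or_pos n with rfl | hn'
    · exact ⟨0, by omega, by omega, by simpa using hj⟩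
    · by_cases h : j ≤ n * K
      · obtain ⟨i, hi, h1, h2⟩ := ih hn' h
        exact ⟨i, by omega, h1, h2⟩
      · have hs : (n + 1) * K = n * K + K := Nat.succ_mul n K
        exact ⟨n, by omega, by omega, by omega⟩

/-- A residue modulo `m*K` determines the edge index up to two candidates. -/
lemma helper_residue (K m i j : ℕ) (hK : 1 ≤ K) (hi : i < m)
    (h1 : i * K ≤ j) (h2 : j ≤ i * K + K) :
    i = (j % (m * K)) / K ∨ i + 1 = (j % (m * K)) / K ∨
      (j % (m * K) = 0 ∧ i = m - 1) := by
  have hK0 : 0 < K := hK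
  have hs : (i + 1) * K = i * K + K := Nat.succ_mul i K
  have hle : (i + 1) * K ≤ m * K := Nat.mul_le_mul_right K (by omega)
  have hjle : j ≤ m * K := by omega
  rcases lt_or_eq_of_le hjle with hlt | rfl
  · rw [Nat.mod_eq_of_lt hlt]
    have hd1 : i ≤ j / K := (Nat.le_div_iff_mul_le hK0).2 h1
    have hd2 : j / K ≤ i + 1 := by
      calc j / K ≤ ((i + 1) * K) / K := Nat.div_le_div_right (by omega)
        _ = i + 1 := Nat.mul_div_cancel _ hK0
    omega
  · right; right
    refine ⟨Nat.mod_self _, ?_⟩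
    have : m * K ≤ (i + 1) * K := by omega
    have := Nat.le_of_mul_le_mul_right this hK0
    omega

theorem path_cycle_ramsey_lower_bound (k m n : ℕ) (hk : 2 ≤ k) (hm : 3 ≤ m)
    (hmn : m ≤ n) :
    ∀ N : ℕ, (∀ col : Finset (Fin N) → Bool,
        HasLoosePath k col true n ∨ HasLooseCycle k col false m) →
      (k - 1) * n + (m + 1) / 2 ≤ N := by
  intro N hN
  by_contra hlt
  push_neg at hlt
  have hK1 : 1 ≤ k - 1 := by omega
  classical
  rcases hN (fun s => decide (∀ x ∈ s, (x : ℕ) < (k - 1) * n)) with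
    ⟨v, hinj, hedges⟩ | ⟨v, hinj, hedges⟩
  · -- red path: would need n*(k-1)+1 vertices inside the first (k-1)*n ones
    have hall : ∀ j ∈ Finset.Iio (n * (k - 1) + 1), ((v j : ℕ) < (k - 1) * n) := by
      intro j hj
      rw [Finset.mem_Iio] at hj
      obtain ⟨i, hin, h1, h2⟩ := helper_edge_cover (k - 1) n j hK1 (by omega) (by omega)
      have hc := hedges i hin
      rw [decide_eq_true_iff] at hc
      refine hc (v j) (Finset.mem_image_of_mem v ?_)
      simp only [looseEdgeIdx, Finset.mem_Icc]
      omega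
    have hcard1 : ((Finset.Iio (n * (k - 1) + 1)).image v).card = n * (k - 1) + 1 := by
      rw [Finset.card_image_of_injOn (by rw [Finset.coe_Iio]; exact hinj), Nat.card_Iio]
    have hsub : (Finset.Iio (n * (k - 1) + 1)).image v ⊆
        Finset.univ.filter (fun x : Fin N => (x : ℕ) < (k - 1) * n) := by
      intro x hx
      obtain ⟨j, hj, rfl⟩ := Finset.mem_image.mp hx
      simp only [Finset.mem_filter, Finset.mem_univ, true_and]
      exact hall j hj
    have hcard2 : (Finset.univ.filter (fun x : Fin N => (x : ℕ) < (k - 1) * n)).card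
        ≤ (k - 1) * n := by
      have := Finset.card_le_card_of_injOn (fun x : Fin N => (x : ℕ))
        (s := Finset.univ.filter (fun x : Fin N => (x : ℕ) < (k - 1) * n))
        (t := Finset.range ((k - 1) * n))
        (by intro x hx; simp only [Finset.mem_coe, Finset.mem_filter] at hx
            simp only [Finset.mem_coe, Finset.mem_range]; exact hx.2)
        (fun a _ b _ h => Fin.val_injective h)
      simpa using this
    have hle := Finset.card_le_card hsub
    have hcm : n * (k - 1) = (k - 1) * n := Nat.mul_comm _ _
    omega
  · -- blue cycle: each edge of the cycle meets the small set A
    have hM0 : 0 < m * (k - 1) := Nat.mul_pos (by omega) hK1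
    have hex : ∀ i : ℕ, ∃ j : ℕ, i < m →
        (i * (k - 1) ≤ j ∧ j ≤ i * (k - 1) + (k - 1) ∧
          (k - 1) * n ≤ (v (j % (m * (k - 1))) : ℕ)) := by
      intro i
      by_cases hi : i < m
      · have hc := hedges i hi
        rw [decide_eq_false_iff_not] at hc
        push_neg at hc
        obtain ⟨x, hx, hxa⟩ := hc
        simp only [Finset.mem_image, looseEdgeIdx, Finset.mem_Icc] at hx
        obtain ⟨j, ⟨hj1, hj2⟩, rfl⟩ := hx
        exact ⟨j, fun _ => ⟨hj1, hj2, hxa⟩⟩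
      · exact ⟨0, fun h => absurd h hi⟩
    choose J hJ using hex
    set F : ℕ → Fin N := fun i => v (J i % (m * (k - 1))) with hF
    have hsub : (Finset.range m).image F ⊆
        Finset.univ.filter (fun x : Fin N => (k - 1) * n ≤ (x : ℕ)) := by
      intro x hx
      obtain ⟨i, hi, rfl⟩ := Finset.mem_image.mp hx
      rw [Finset.mem_range] at hi
      simp only [Finset.mem_filter, Finset.mem_univ, true_and]
      exact (hJ i hi).2.2
    have hAcard : (Finset.univ.filter (fun x : Fin N => (k - 1) * n ≤ (x : ℕ))).card
        ≤ N - (k - 1) * n := by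
      have := Finset.card_le_card_of_injOn (fun x : Fin N => (x : ℕ))
        (s := Finset.univ.filter (fun x : Fin N => (k - 1) * n ≤ (x : ℕ)))
        (t := Finset.Ico ((k - 1) * n) N)
        (by intro x hx; simp only [Finset.mem_coe, Finset.mem_filter] at hx
            simp only [Finset.mem_coe, Finset.mem_Ico]; exact ⟨hx.2, x.isLt⟩)
        (fun a _ b _ h => Fin.val_injective h)
      rwa [Nat.card_Ico] at this
    have hfib : ∀ a ∈ (Finset.range m).image F,
        ((Finset.range m).filter (fun i => F i = a)).card ≤ 2 := by
      intro a ha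
      obtain ⟨i0, hi0m, hFi0⟩ := Finset.mem_image.mp ha
      rw [Finset.mem_range] at hi0m
      have hsub2 : (Finset.range m).filter (fun i => F i = a) ⊆
          {(J i0 % (m * (k - 1))) / (k - 1),
            if J i0 % (m * (k - 1)) = 0 then m - 1
              else (J i0 % (m * (k - 1))) / (k - 1) - 1} := by
        intro i hi
        rw [Finset.mem_filter, Finset.mem_range] at hi
        have him := hi.1
        have hvv : v (J i % (m * (k - 1))) = v (J i0 % (m * (k - 1))) := by
          have : F i = F i0 := by rw [hi.2, hFi0]
          exact this
        have hmod : J i % (m * (k - 1)) = J i0 % (m * (k - 1)) :=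
          hinj (Set.mem_Iio.mpr (Nat.mod_lt _ hM0)) (Set.mem_Iio.mpr (Nat.mod_lt _ hM0)) hvv
        obtain ⟨hj1, hj2, _⟩ := hJ i him
        have hres := helper_residue (k - 1) m i (J i) hK1 him hj1 hj2
        rw [hmod] at hres
        simp only [Finset.mem_insert, Finset.mem_singleton]
        rcases hres with h | h | h
        · exact Or.inl h
        · right
          have : J i0 % (m * (k - 1)) ≠ 0 := by
            intro h0
            rw [h0] at h
            simp at h
          rw [if_neg this]
          omega
        · right
          rw [if_pos h.1]
          exact h.2
      calc ((Finset.range m).filter (fun i => F i = a)).card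
          ≤ _ := Finset.card_le_card hsub2
        _ ≤ 2 := le_trans (Finset.card_insert_le _ _) (by simp)
    have hcount : (Finset.range m).card ≤ 2 * ((Finset.range m).image F).card :=
      Finset.card_le_mul_card_image _ 2 hfib
    have himg := Finset.card_le_card hsub
    rw [Finset.card_range] at hcount
    omega
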